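/- arXiv:2208.02569 — 2 statements merged into one kernel-verified Lean document; each statement's English description precedes it below -/
import Mathlib

section
/- In the symmetric group S_n with simple transpositions s_1, ..., s_{n-1}, any two Coxeter elements (products of all simple reflections, each appearing exactly once, in some order) are conjugate by cyclic shifts. -/
set_option maxHeartbeats 1000000

open List

namespace Stmt2Aux

variable {n : ℕ}

/-! ### Pure list combinatorics -/

section ListLemmas
variable {α : Type*} [DecidableEq α]

omit [DecidableEq α] in
lemma sub_total {l : List α} (hnd : l.Nodup) {x y : α} (hx : x ∈ l) (hy : y ∈ l)
    (hne : x ≠ y) : [x, y] <+ l ∨ [y, x] <+ l := by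
  induction l with
  | nil => simp at hx
  | cons c t ih =>
      rcases List.mem_cons.mp hx with rfl | hx'
      · left
        rcases List.mem_cons.mp hy with rfl | hy'
        · exact absurd rfl hne
        · exact (List.singleton_sublist.mpr hy').cons₂ x
      · rcases List.mem_cons.mp hy with rfl | hy'
        · right
          exact (List.singleton_sublist.mpr hx').cons₂ y
        · rcases ih (List.nodup_cons.mp hnd).2 hx' hy' with h | h
          · exact Or.inl (h.cons c)
          · exact Or.inr (h.cons c)

omit [DecidableEq α] in
lemma sub_antisymm {l : List α} (hnd : l.Nodup) {x y : α} (hne : x ≠ y)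
    (h1 : [x, y] <+ l) (h2 : [y, x] <+ l) : False := by
  induction l with
  | nil => simp at h1
  | cons c t ih =>
      have hct : c ∉ t := (List.nodup_cons.mp hnd).1
      cases h1 with
      | cons _ h1' =>
          cases h2 with
          | cons _ h2' => exact ih (List.nodup_cons.mp hnd).2 h1' h2'
          | cons_cons _ h2' => exact hct (h1'.subset (by simp))
      | cons_cons _ h1' =>
          cases h2 with
          | cons _ h2' => exact hct (h2'.subset (by simp))
          | cons_cons _ h2' => exact hne rfl

omit [DecidableEq α] in
lemma sub_trans {l : List α} (hnd : l.Nodup) {x y z : α}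
    (h1 : [x, y] <+ l) (h2 : [y, z] <+ l) : [x, z] <+ l := by
  induction l with
  | nil => simp at h1
  | cons c t ih =>
      have hct : c ∉ t := (List.nodup_cons.mp hnd).1
      cases h1 with
      | cons _ h1' =>
          cases h2 with
          | cons _ h2' => exact (ih (List.nodup_cons.mp hnd).2 h1' h2').cons c
          | cons_cons _ h2' => exact absurd (h1'.subset (by simp)) hct
      | cons_cons _ h1' =>
          cases h2 with
          | cons _ h2' =>
              have hz : [z] <+ t := by
                have hzy : [z] <+ [y, z] := by simp
                exact hzy.trans h2'
              exact hz.cons₂ x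
          | cons_cons _ h2' => exact absurd (h1'.subset (by simp)) hct

omit [DecidableEq α] in
lemma not_sub_cons_of_not_mem {k x : α} {r : List α} (hk : k ∉ r) (hx : x ≠ k) :
    ¬ ([x, k] <+ k :: r) := by
  intro h
  cases h with
  | cons _ h' => exact hk (h'.subset (by simp))
  | cons_cons _ h' => exact hx rfl

lemma pair_sublist_iff_of_ne {a b : List α} {k x y : α} (hka : k ∉ a) (hkb : k ∉ b)
    (hx : x ≠ k) (hy : y ≠ k) :
    ([x, y] <+ a ++ k :: b) ↔ [x, y] <+ a ++ b := by
  constructor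
  · intro h
    have hf := h.filter (fun t => t ≠ k)
    have h1 : List.filter (fun t => t ≠ k) [x, y] = [x, y] := by
      simp [List.filter, hx, hy]
    have h2 : List.filter (fun t => t ≠ k) (a ++ k :: b) = a ++ b := by
      rw [List.filter_append, List.filter_cons_of_neg (by simp)]
      rw [List.filter_eq_self.mpr, List.filter_eq_self.mpr]
      · intro c hc
        simp only [decide_eq_true_eq]
        exact fun h => hkb (h ▸ hc)
      · intro c hc
        simp only [decide_eq_true_eq]
        exact fun h => hka (h ▸ hc)
    rwa [h1, h2] at hf
  · intro h
    refine h.trans (List.Sublist.append_left ?_ a)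
    exact List.sublist_cons_self k b

lemma pair_sublist_cons_iff {t : List α} {k x y : α} (hk : k ∉ t)
    (hx : x ≠ k) (hy : y ≠ k) : ([x, y] <+ k :: t) ↔ [x, y] <+ t := by
  have := pair_sublist_iff_of_ne (a := []) (b := t) (k := k) (x := x) (y := y)
    (List.not_mem_nil) hk hx hy
  simpa using this

end ListLemmas

/-! ### The permutation representation of the type-A Coxeter group -/

def frep (i : Fin n) : Equiv.Perm (Fin (n + 1)) := Equiv.swap i.castSucc i.succ

lemma frep_liftable : (CoxeterMatrix.Aₙ n).IsLiftable (frep (n := n)) := by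
  intro i j
  rcases eq_or_ne i j with rfl | hne
  · have hM : CoxeterMatrix.Aₙ n i i = 1 := by simp [CoxeterMatrix.Aₙ]
    rw [hM, pow_one, frep, Equiv.swap_mul_self]
  · by_cases hadj : (j : ℕ) + 1 = (i : ℕ) ∨ (i : ℕ) + 1 = (j : ℕ)
    · have hM : CoxeterMatrix.Aₙ n i j = 3 := by
        simp [CoxeterMatrix.Aₙ, CoxeterMatrix.A, hne, hadj]
      rw [hM]
      have key : ∀ a b c : Fin (n+1), a ≠ b → a ≠ c → b ≠ c →
          (Equiv.swap a b * Equiv.swap a c) ^ 3 = 1 := by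
        intro a b c h1 h2 h3
        have ht := Equiv.Perm.isThreeCycle_swap_mul_swap_same h1 h2 h3
        rw [← ht.orderOf]
        exact pow_orderOf_eq_one _
      rcases hadj with h | h
      · have hbe : (j.succ : Fin (n+1)) = i.castSucc := by
          apply Fin.ext; simp [h]
        have heq : frep i * frep j
            = Equiv.swap i.castSucc i.succ * Equiv.swap i.castSucc j.castSucc := by
          rw [frep, frep, ← hbe, Equiv.swap_comm j.castSucc j.succ]
        rw [heq]
        apply key <;> (apply Fin.ne_of_val_ne; simp; try omega)
      · have hbe : (i.succ : Fin (n+1)) = j.castSucc := by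
          apply Fin.ext; simp [h]
        have heq : frep i * frep j
            = Equiv.swap j.castSucc i.castSucc * Equiv.swap j.castSucc j.succ := by
          rw [frep, frep, ← hbe, Equiv.swap_comm i.castSucc i.succ]
        rw [heq]
        apply key <;> (apply Fin.ne_of_val_ne; simp; try omega)
    · have hM : CoxeterMatrix.Aₙ n i j = 2 := by
        simp [CoxeterMatrix.Aₙ, CoxeterMatrix.A, hne, hadj]
      rw [hM]
      have hdisj : (frep i).Disjoint (frep j) := by
        intro x
        by_cases hx : x = i.castSucc ∨ x = i.succ
        · right
          rcases hx with rfl | rfl <;>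
          · rw [frep, Equiv.swap_apply_of_ne_of_ne] <;>
            · apply Fin.ne_of_val_ne; simp; omega
        · left
          push_neg at hx
          rw [frep, Equiv.swap_apply_of_ne_of_ne hx.1 hx.2]
      have hc := hdisj.commute
      calc (frep i * frep j) ^ 2 = frep i * (frep j * frep i) * frep j := by
            rw [pow_two]; group
        _ = frep i * (frep i * frep j) * frep j := by rw [hc.eq]
        _ = (frep i * frep i) * (frep j * frep j) := by group
        _ = 1 := by simp [frep, Equiv.swap_mul_self]

lemma frep_boundary {i : ℕ} {j : Fin n} (h : (j : ℕ) ≠ i) (a : Fin (n+1)) :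
    ((frep j a : Fin (n+1)) : ℕ) ≤ i ↔ (a : ℕ) ≤ i := by
  rcases eq_or_ne a j.castSucc with rfl | h1
  · rw [frep, Equiv.swap_apply_left]; simp; omega
  rcases eq_or_ne a j.succ with rfl | h2
  · rw [frep, Equiv.swap_apply_right]; simp; omega
  · rw [frep, Equiv.swap_apply_of_ne_of_ne h1 h2]

lemma perm_apply_inv_self (σ : Equiv.Perm (Fin (n+1))) (x : Fin (n+1)) : σ (σ⁻¹ x) = x :=
  (Equiv.eq_symm_apply σ).mp rfl

def Invb (σ : Equiv.Perm (Fin (n+1))) (i : ℕ) : Prop :=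
  ∀ a : Fin (n+1), ((σ a : Fin (n+1)) : ℕ) ≤ i ↔ (a : ℕ) ≤ i

lemma invb_one (i : ℕ) : Invb (n := n) 1 i := fun _ => Iff.rfl

lemma invb_mul {σ τ : Equiv.Perm (Fin (n+1))} {i : ℕ} (hσ : Invb σ i) (hτ : Invb τ i) :
    Invb (σ * τ) i := fun a => (hσ (τ a)).trans (hτ a)

def Bd (σ : Equiv.Perm (Fin (n+1))) (i : ℕ) : Prop :=
  ∃ a : Fin (n+1), (a : ℕ) ≤ i ∧ i < ((σ a : Fin (n+1)) : ℕ)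

instance (σ : Equiv.Perm (Fin (n+1))) (i : ℕ) : Decidable (Bd σ i) := by
  unfold Bd; infer_instance

lemma bd_frep_mul {σ : Equiv.Perm (Fin (n+1))} {j : Fin n} {i : ℕ} (h : (j : ℕ) ≠ i) :
    Bd (frep j * σ) i ↔ Bd σ i := by
  unfold Bd
  apply exists_congr
  intro a
  rw [Equiv.Perm.mul_apply]
  constructor
  · rintro ⟨h1, h2⟩
    exact ⟨h1, by have := (frep_boundary h (σ a)); omega⟩
  · rintro ⟨h1, h2⟩
    exact ⟨h1, by have := (frep_boundary h (σ a)); omega⟩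

def Dcount (σ : Equiv.Perm (Fin (n+1))) : ℕ :=
  (Finset.univ.filter (fun i : Fin n => Bd σ (i : ℕ))).card

lemma dcount_frep_mul (σ : Equiv.Perm (Fin (n+1))) (j : Fin n) :
    Dcount (frep j * σ) ≤ Dcount σ + 1 := by
  have hsub : (Finset.univ.filter (fun i : Fin n => Bd (frep j * σ) (i : ℕ)))
      ⊆ insert j (Finset.univ.filter (fun i : Fin n => Bd σ (i : ℕ))) := by
    intro i hi
    rw [Finset.mem_filter] at hi
    rcases eq_or_ne j i with rfl | hne
    · exact Finset.mem_insert_self _ _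
    · apply Finset.mem_insert_of_mem
      rw [Finset.mem_filter]
      have := (bd_frep_mul (σ := σ) (Fin.val_ne_of_ne hne)).mp hi.2
      exact ⟨Finset.mem_univ _, this⟩
  calc Dcount (frep j * σ)
      ≤ (insert j (Finset.univ.filter (fun i : Fin n => Bd σ (i : ℕ)))).card :=
        Finset.card_le_card hsub
    _ ≤ Dcount σ + 1 := Finset.card_insert_le _ _

lemma dcount_one : Dcount (n := n) 1 = 0 := by
  unfold Dcount
  rw [Finset.card_eq_zero, Finset.filter_eq_empty_iff]
  rintro i -
  rintro ⟨a, h1, h2⟩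
  simp at h2; omega

section WithCS
variable {W : Type*} [Group W] (cs : CoxeterSystem (CoxeterMatrix.Aₙ n) W)

def Pm : W →* Equiv.Perm (Fin (n+1)) := cs.lift ⟨frep, frep_liftable⟩

lemma pm_simple (i : Fin n) : Pm cs (cs.simple i) = frep i :=
  cs.lift_apply_simple frep_liftable i

lemma dcount_word_le (ω : List (Fin n)) : Dcount (Pm cs (cs.wordProd ω)) ≤ ω.length := by
  induction ω with
  | nil => rw [cs.wordProd_nil, map_one, dcount_one]; simp
  | cons j ω ih =>
      rw [cs.wordProd_cons, map_mul, pm_simple]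
      calc Dcount (frep j * Pm cs (cs.wordProd ω)) ≤ Dcount (Pm cs (cs.wordProd ω)) + 1 :=
            dcount_frep_mul _ _
        _ ≤ ω.length + 1 := by omega
        _ = (j :: ω).length := by simp

lemma invb_word {i : ℕ} (ω : List (Fin n)) (h : ∀ j ∈ ω, (j : ℕ) ≠ i) :
    Invb (Pm cs (cs.wordProd ω)) i := by
  induction ω with
  | nil => rw [cs.wordProd_nil, map_one]; exact invb_one i
  | cons j ω ih =>
      rw [cs.wordProd_cons, map_mul, pm_simple]
      exact invb_mul (fun a => frep_boundary (h j (mem_cons_self)) a)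
        (ih (fun x hx => h x (mem_cons_of_mem _ hx)))

lemma bd_all {l : List (Fin n)} (hnd : l.Nodup) (hc : ∀ i : Fin n, i ∈ l) (k : Fin n) :
    Bd (Pm cs (cs.wordProd l)) (k : ℕ) := by
  obtain ⟨a, b, rfl⟩ := List.append_of_mem (hc k)
  have hka : k ∉ a := by
    have h := List.nodup_append'.mp hnd
    exact fun hk => h.2.2 hk (mem_cons_self)
  have hkb : k ∉ b := by
    have h := (List.nodup_append.mp hnd).2.1
    exact (List.nodup_cons.mp h).1
  have hA : Invb (Pm cs (cs.wordProd a)) (k : ℕ) :=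
    invb_word cs a (fun j hj => Fin.val_ne_of_ne (fun h => hka (h ▸ hj)))
  have hB : Invb (Pm cs (cs.wordProd b)) (k : ℕ) :=
    invb_word cs b (fun j hj => Fin.val_ne_of_ne (fun h => hkb (h ▸ hj)))
  set A := Pm cs (cs.wordProd a)
  set B := Pm cs (cs.wordProd b)
  have hdecomp : Pm cs (cs.wordProd (a ++ k :: b)) = A * (frep k * B) := by
    rw [cs.wordProd_append, cs.wordProd_cons, map_mul, map_mul, pm_simple]
  refine ⟨B⁻¹ k.castSucc, ?_, ?_⟩
  · have := (hB (B⁻¹ k.castSucc))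
    rw [perm_apply_inv_self] at this
    simp only [Fin.coe_castSucc] at this
    omega
  · rw [hdecomp]
    simp only [Equiv.Perm.mul_apply, perm_apply_inv_self]
    rw [frep, Equiv.swap_apply_left]
    have := hA k.succ
    simp only [Fin.val_succ] at this
    omega

lemma word_length_eq {l : List (Fin n)} (hnd : l.Nodup) (hc : ∀ i : Fin n, i ∈ l) :
    cs.length (cs.wordProd l) = n ∧ l.length = n := by
  have hlen : l.length = n := by
    have h1 : l.toFinset = Finset.univ := by
      ext x; simp [hc x]
    have := List.toFinset_card_of_nodup hnd
    rw [h1] at this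
    simpa using this.symm
  refine ⟨?_, hlen⟩
  have hub : cs.length (cs.wordProd l) ≤ n := by
    have := cs.length_wordProd_le l; omega
  have hlb : n ≤ cs.length (cs.wordProd l) := by
    obtain ⟨ω, hω1, hω2⟩ := cs.exists_reduced_word (cs.wordProd l)
    have h1 : Dcount (Pm cs (cs.wordProd l)) = n := by
      unfold Dcount
      rw [Finset.filter_true_of_mem, Finset.card_univ, Fintype.card_fin]
      intro i _
      exact bd_all cs hnd hc i
    have h2 : Dcount (Pm cs (cs.wordProd l)) ≤ ω.length := by
      rw [hω2]; exact dcount_word_le cs ω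
    have := hω1.eq; rw [← hω2] at this
    omega
  omega

/-- The cyclic-shift step relation. -/
def Stp (u v : W) : Prop :=
  ∃ x y : W, u = x * y ∧ v = y * x ∧
    cs.length u = cs.length x + cs.length y ∧
    cs.length v = cs.length x + cs.length y

lemma stp_symm : Symmetric (Stp cs) := by
  rintro u v ⟨x, y, h1, h2, h3, h4⟩
  exact ⟨y, x, h2, h1, by rw [h4, Nat.add_comm], by rw [h3, Nat.add_comm]⟩

lemma step_rot (u v : List (Fin n)) (hnd : (u ++ v).Nodup) (hc : ∀ i : Fin n, i ∈ u ++ v) :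
    Stp cs (cs.wordProd (u ++ v)) (cs.wordProd (v ++ u)) := by
  have hperm : (u ++ v) ~ (v ++ u) := List.perm_append_comm
  have hnd' : (v ++ u).Nodup := hperm.nodup_iff.mp hnd
  have hc' : ∀ i : Fin n, i ∈ v ++ u := fun i => hperm.mem_iff.mp (hc i)
  obtain ⟨hl1, hl2⟩ := word_length_eq cs hnd hc
  obtain ⟨hl1', hl2'⟩ := word_length_eq cs hnd' hc'
  refine ⟨cs.wordProd u, cs.wordProd v, (cs.wordProd_append u v), (cs.wordProd_append v u), ?_, ?_⟩
  · have h1 : cs.length (cs.wordProd u) ≤ u.length := cs.length_wordProd_le u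
    have h2 : cs.length (cs.wordProd v) ≤ v.length := cs.length_wordProd_le v
    have h3 := cs.length_mul_le (cs.wordProd u) (cs.wordProd v)
    rw [← cs.wordProd_append u v] at h3
    have h4 : u.length + v.length = n := by
      have := List.length_append (as := u) (bs := v); omega
    omega
  · have h1 : cs.length (cs.wordProd u) ≤ u.length := cs.length_wordProd_le u
    have h2 : cs.length (cs.wordProd v) ≤ v.length := cs.length_wordProd_le v
    have h3 := cs.length_mul_le (cs.wordProd u) (cs.wordProd v)
    rw [← cs.wordProd_append u v] at h3
    have h4 : u.length + v.length = n := by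
      have := List.length_append (as := u) (bs := v); omega
    omega

lemma simple_comm {i j : Fin n} (h : (i : ℕ) + 1 < (j : ℕ) ∨ (j : ℕ) + 1 < (i : ℕ)) :
    cs.simple i * cs.simple j = cs.simple j * cs.simple i := by
  have hne : i ≠ j := by
    intro hh; rw [hh] at h; omega
  have hadj : ¬((j : ℕ) + 1 = (i : ℕ) ∨ (i : ℕ) + 1 = (j : ℕ)) := by omega
  have hM : CoxeterMatrix.Aₙ n i j = 2 := by
    simp [CoxeterMatrix.Aₙ, CoxeterMatrix.A, hne, hadj]
  have hsq := cs.simple_mul_simple_pow i j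
  rw [hM, pow_two] at hsq
  have h1 : cs.simple i * cs.simple j = (cs.simple i * cs.simple j)⁻¹ :=
    eq_inv_of_mul_eq_one_left hsq
  rw [h1, mul_inv_rev, cs.inv_simple, cs.inv_simple]

lemma move_right (k : Fin n) (b : List (Fin n))
    (h : ∀ x ∈ b, cs.simple k * cs.simple x = cs.simple x * cs.simple k) :
    cs.wordProd (k :: b) = cs.wordProd (b ++ [k]) := by
  induction b with
  | nil => simp
  | cons x b ih =>
      rw [cs.wordProd_cons, cs.wordProd_cons, ← mul_assoc, h x (mem_cons_self), mul_assoc,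
        ← cs.wordProd_cons, ih (fun y hy => h y (mem_cons_of_mem _ hy)), cons_append,
        cs.wordProd_cons]

end WithCS

/-! ### The measure -/

/-- Whether the edge `j` (i.e. the pair `(j, j+1)`) is inverted in `l`, as a statement about
natural numbers. -/
def Q (l : List (Fin n)) (j : ℕ) : Prop :=
  ∃ i i' : Fin n, (i : ℕ) = j + 1 ∧ (i' : ℕ) = j ∧ [i, i'] <+ l

instance (l : List (Fin n)) : DecidablePred (Q l) := fun j => by
  unfold Q; infer_instance

/-- The contribution of edge `j` to the measure. -/
def F (l : List (Fin n)) (j : ℕ) : ℕ :=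
  if h : j + 1 < n then
    (if [(⟨j+1, h⟩ : Fin n), (⟨j, by omega⟩ : Fin n)] <+ l then j + 1 else 0)
  else 0

def mea (l : List (Fin n)) : ℕ := ∑ j ∈ Finset.range n, F l j

lemma q_iff_F_pos (l : List (Fin n)) (j : ℕ) : Q l j ↔ 0 < F l j := by
  constructor
  · rintro ⟨i, i', h1, h2, h3⟩
    have hj1 : j + 1 < n := h1 ▸ i.isLt
    have e1 : (⟨j+1, hj1⟩ : Fin n) = i := Fin.ext (by simp [h1])
    have e2 : (⟨j, by omega⟩ : Fin n) = i' := Fin.ext (by simp [h2])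
    rw [F, dif_pos hj1, e1, e2, if_pos h3]
    omega
  · intro h
    rw [F] at h
    by_cases hj1 : j + 1 < n
    · rw [dif_pos hj1] at h
      by_cases hs : [(⟨j+1, hj1⟩ : Fin n), (⟨j, by omega⟩ : Fin n)] <+ l
      · exact ⟨_, _, rfl, rfl, hs⟩
      · rw [if_neg hs] at h; omega
    · rw [dif_neg hj1] at h; omega

section Main
variable {W : Type*} [Group W] (cs : CoxeterSystem (CoxeterMatrix.Aₙ n) W)

lemma eq_finRange_of_noQ {l : List (Fin n)} (hnd : l.Nodup) (hc : ∀ i : Fin n, i ∈ l)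
    (hnoQ : ∀ j, ¬ Q l j) : l = List.finRange n := by
  have forward : ∀ x y : Fin n, (x : ℕ) + 1 = (y : ℕ) → [x, y] <+ l := by
    intro x y hxy
    have hne : x ≠ y := Fin.ne_of_val_ne (by omega)
    rcases sub_total hnd (hc x) (hc y) hne with h | h
    · exact h
    · exact absurd ⟨y, x, by omega, rfl, h⟩ (hnoQ (x : ℕ))
  have chain : ∀ (d : ℕ) (x y : Fin n), (x : ℕ) + d + 1 = (y : ℕ) → [x, y] <+ l := by
    intro d
    induction d with
    | zero => intro x y h; exact forward x y (by omega)
    | succ d ih =>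
        intro x y h
        have hmid : (x : ℕ) + d + 1 < n := by have := y.isLt; omega
        exact sub_trans hnd (ih x ⟨(x : ℕ) + d + 1, hmid⟩ (by simp))
          (forward ⟨(x : ℕ) + d + 1, hmid⟩ y (by simp; omega))
  have hs : ∀ x y : Fin n, [x, y] <+ l → x < y := by
    intro x y hxy
    have hnds : [x, y].Nodup := hnd.sublist hxy
    have hne : x ≠ y := by simpa using (List.nodup_cons.mp hnds).1
    rcases lt_or_gt_of_ne hne with h | h
    · exact h
    · have hlt : (y : ℕ) < (x : ℕ) := h
      have h2 : [y, x] <+ l := chain ((x : ℕ) - (y : ℕ) - 1) y x (by omega)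
      exact (sub_antisymm hnd hne hxy h2).elim
  have hperm : l ~ List.finRange n :=
    (List.perm_ext_iff_of_nodup hnd (List.nodup_finRange n)).mpr (fun a => by simp [hc a])
  have hsort : List.Pairwise (· < ·) l :=
    List.pairwise_iff_forall_sublist.mpr (fun {a b} h => hs a b h)
  exact List.Perm.eq_of_pairwise' hsort (List.pairwise_lt_finRange n) hperm

lemma reach : ∀ (m : ℕ) (l : List (Fin n)), l.Nodup → (∀ i : Fin n, i ∈ l) → mea l ≤ m →
    Relation.ReflTransGen (Stp cs) (cs.wordProd l) (cs.wordProd (List.finRange n)) := by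
  intro m
  induction m with
  | zero =>
      intro l hnd hc hmea
      have hnoQ : ∀ j, ¬ Q l j := by
        intro j hQ
        have hpos := (q_iff_F_pos l j).mp hQ
        have hjn : j < n := by
          obtain ⟨i, i', hi, hk, -⟩ := hQ
          have := i'.isLt; omega
        have hle : F l j ≤ mea l :=
          Finset.single_le_sum (fun x _ => Nat.zero_le (F l x)) (Finset.mem_range.mpr hjn)
        omega
      rw [eq_finRange_of_noQ hnd hc hnoQ]
  | succ m ih =>
      intro l hnd hc hmea
      by_cases hE : ∃ j, Q l j
      swap
      · push_neg at hE
        rw [eq_finRange_of_noQ hnd hc hE]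
      obtain ⟨j, hQj, hQmin⟩ : ∃ j, Q l j ∧ ∀ m', m' < j → ¬ Q l m' :=
        ⟨Nat.find hE, Nat.find_spec hE, fun m' hm' => Nat.find_min hE hm'⟩
      obtain ⟨i, k, hi, hk, hsub⟩ := hQj
      have hj1 : j + 1 < n := by have := i.isLt; omega
      have hkl : k ∈ l := hsub.subset (by simp)
      obtain ⟨a, b, rfl⟩ := List.append_of_mem hkl
      have hka : k ∉ a := fun hk' => (List.nodup_append'.mp hnd).2.2 hk' (mem_cons_self)
      have hkb : k ∉ b := (List.nodup_cons.mp (List.nodup_append.mp hnd).2.1).1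
      have hkab : k ∉ a ++ b := by simp [hka, hkb]
      have hik : i ≠ k := Fin.ne_of_val_ne (by omega)
      have hib : i ∉ b := by
        intro hmem
        have h1 : [k, i] <+ a ++ k :: b :=
          ((List.singleton_sublist.mpr hmem).cons₂ k).trans (List.sublist_append_right a (k :: b))
        exact sub_antisymm hnd hik hsub h1
      have hkpb : 0 < j → (⟨j - 1, by omega⟩ : Fin n) ∉ b := by
        intro hj0 hmem
        have h1 : [k, (⟨j - 1, by omega⟩ : Fin n)] <+ a ++ k :: b :=
          ((List.singleton_sublist.mpr hmem).cons₂ k).trans (List.sublist_append_right a (k :: b))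
        exact hQmin (j - 1) (by omega) ⟨k, ⟨j - 1, by omega⟩, by omega, by simp, h1⟩
      have hcomm : ∀ x ∈ b, cs.simple k * cs.simple x = cs.simple x * cs.simple k := by
        intro x hx
        apply simple_comm
        have h1 : (x : ℕ) ≠ j := by
          rw [← hk]; exact Fin.val_ne_of_ne (fun h => hkb (h ▸ hx))
        have h2 : (x : ℕ) ≠ j + 1 := by
          rw [← hi]; exact Fin.val_ne_of_ne (fun h => hib (h ▸ hx))
        rcases Nat.eq_zero_or_pos j with hj0 | hj0
        · omega
        · have h3 : (x : ℕ) ≠ j - 1 := by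
            intro hval
            exact hkpb hj0 (by
              have hxeq : x = (⟨j - 1, by omega⟩ : Fin n) := Fin.ext (by simp [hval])
              rwa [← hxeq])
          omega
      have heq1 : cs.wordProd (a ++ k :: b) = cs.wordProd ((a ++ b) ++ [k]) := by
        rw [cs.wordProd_append, move_right cs k b hcomm, ← cs.wordProd_append, List.append_assoc]
      set l' : List (Fin n) := k :: (a ++ b) with hl'
      have hperm : (a ++ k :: b) ~ l' := List.perm_middle
      have hnd' : l'.Nodup := hperm.nodup_iff.mp hnd
      have hc' : ∀ x : Fin n, x ∈ l' := fun x => hperm.subset (hc x)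
      have hperm2 : l' ~ (a ++ b) ++ [k] := (List.perm_append_singleton k (a ++ b)).symm
      have hnd'' : ((a ++ b) ++ [k]).Nodup := hperm2.nodup_iff.mp hnd'
      have hc'' : ∀ x : Fin n, x ∈ (a ++ b) ++ [k] := fun x => hperm2.subset (hc' x)
      have hstep : Stp cs (cs.wordProd ((a ++ b) ++ [k])) (cs.wordProd l') :=
        step_rot cs (a ++ b) [k] hnd'' hc''
      -- measure computation
      have hFeq : ∀ jj, jj ≠ j → (j = 0 ∨ jj ≠ j - 1) → F l' jj = F (a ++ k :: b) jj := by
        intro jj h1 h2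
        rw [F, F]
        by_cases hlt : jj + 1 < n
        · rw [dif_pos hlt, dif_pos hlt]
          have hvx : jj + 1 ≠ j := by rcases h2 with h2 | h2 <;> omega
          have hx : (⟨jj + 1, hlt⟩ : Fin n) ≠ k := Fin.ne_of_val_ne (by simp [← hk] at hvx ⊢; omega)
          have hy : (⟨jj, by omega⟩ : Fin n) ≠ k := Fin.ne_of_val_ne (by simp; omega)
          have e1 := pair_sublist_iff_of_ne hka hkb hx hy
          have e2 := pair_sublist_cons_iff hkab hx hy
          rw [if_congr (e2.trans e1.symm) rfl rfl]
        · rw [dif_neg hlt, dif_neg hlt]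
      have hFj_l : F (a ++ k :: b) j = j + 1 := by
        rw [F, dif_pos hj1]
        have e1 : (⟨j + 1, hj1⟩ : Fin n) = i := Fin.ext (by simp; omega)
        have e2 : (⟨j, by omega⟩ : Fin n) = k := Fin.ext (by simp; omega)
        rw [e1, e2, if_pos hsub]
      have hFj_l' : F l' j = 0 := by
        rw [F, dif_pos hj1]
        have e2 : (⟨j, by omega⟩ : Fin n) = k := Fin.ext (by simp; omega)
        rw [e2, if_neg]
        exact not_sub_cons_of_not_mem hkab (Fin.ne_of_val_ne (by simp; omega))
      have hjmem : j ∈ Finset.range n := Finset.mem_range.mpr (by omega)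
      have hml : mea (a ++ k :: b) = mea l' + 1 := by
        rcases Nat.eq_zero_or_pos j with hj0 | hj0
        · have hsum_l : mea (a ++ k :: b)
              = ∑ x ∈ (Finset.range n).erase j, F (a ++ k :: b) x + F (a ++ k :: b) j :=
            (Finset.sum_erase_add _ _ hjmem).symm
          have hsum_l' : mea l' = ∑ x ∈ (Finset.range n).erase j, F l' x + F l' j :=
            (Finset.sum_erase_add _ _ hjmem).symm
          have hcongr : ∑ x ∈ (Finset.range n).erase j, F l' x
              = ∑ x ∈ (Finset.range n).erase j, F (a ++ k :: b) x :=
            Finset.sum_congr rfl (fun x hx => hFeq x (Finset.ne_of_mem_erase hx) (Or.inl hj0))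
          rw [hsum_l, hsum_l', hcongr, hFj_l, hFj_l']
          omega
        · have hjm_mem : j - 1 ∈ (Finset.range n).erase j := by
            rw [Finset.mem_erase, Finset.mem_range]; omega
          have hFjm_l : F (a ++ k :: b) (j - 1) = 0 := by
            rw [F, dif_pos (show j - 1 + 1 < n by omega)]
            rw [if_neg]
            intro hs'
            exact hQmin (j - 1) (by omega) ⟨_, _, by simp, by simp, hs'⟩
          have hFjm_l' : F l' (j - 1) = j := by
            rw [F, dif_pos (show j - 1 + 1 < n by omega)]
            have e2 : (⟨j - 1 + 1, by omega⟩ : Fin n) = k := Fin.ext (by simp; omega)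
            have hkp_mem : (⟨j - 1, by omega⟩ : Fin n) ∈ a ++ b := by
              have hmem := hc (⟨j - 1, by omega⟩ : Fin n)
              rw [List.mem_append, List.mem_cons] at hmem
              rcases hmem with h | h | h
              · exact List.mem_append_left b h
              · exact absurd (congrArg Fin.val h) (by simp; omega)
              · exact absurd h (hkpb hj0)
            rw [e2, if_pos (((List.singleton_sublist.mpr hkp_mem).cons₂ k))]
            omega
          have hsum_l : mea (a ++ k :: b)
              = ∑ x ∈ (Finset.range n).erase j, F (a ++ k :: b) x + F (a ++ k :: b) j :=
            (Finset.sum_erase_add _ _ hjmem).symm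
          have hsum_l' : mea l' = ∑ x ∈ (Finset.range n).erase j, F l' x + F l' j :=
            (Finset.sum_erase_add _ _ hjmem).symm
          have hsum2_l : ∑ x ∈ (Finset.range n).erase j, F (a ++ k :: b) x
              = ∑ x ∈ ((Finset.range n).erase j).erase (j - 1), F (a ++ k :: b) x
                + F (a ++ k :: b) (j - 1) :=
            (Finset.sum_erase_add _ _ hjm_mem).symm
          have hsum2_l' : ∑ x ∈ (Finset.range n).erase j, F l' x
              = ∑ x ∈ ((Finset.range n).erase j).erase (j - 1), F l' x + F l' (j - 1) :=
            (Finset.sum_erase_add _ _ hjm_mem).symm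
          have hcongr : ∑ x ∈ ((Finset.range n).erase j).erase (j - 1), F l' x
              = ∑ x ∈ ((Finset.range n).erase j).erase (j - 1), F (a ++ k :: b) x := by
            apply Finset.sum_congr rfl
            intro x hx
            have hx1 := Finset.ne_of_mem_erase hx
            have hx2 := Finset.ne_of_mem_erase (Finset.mem_of_mem_erase hx)
            exact hFeq x hx2 (Or.inr hx1)
          rw [hsum_l, hsum_l', hsum2_l, hsum2_l', hcongr, hFj_l, hFj_l', hFjm_l, hFjm_l']
          omega
      have hmea' : mea l' ≤ m := by omega
      have hstep2 : Relation.ReflTransGen (Stp cs) (cs.wordProd (a ++ k :: b)) (cs.wordProd l') := by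
        rw [heq1]
        exact Relation.ReflTransGen.single hstep
      exact hstep2.trans (ih l' hnd' hc' hmea')

end Main

end Stmt2Aux


/-- In the symmetric group `Sₙ` (presented as the Coxeter group of type `A`), any two Coxeter
elements (products of all the simple reflections, each appearing exactly once, in some order)
are conjugate by cyclic shifts. -/
theorem stmt_2 {n : ℕ} {W : Type*} [Group W]
    (cs : CoxeterSystem (CoxeterMatrix.Aₙ n) W) (w w' : W)
    (hw : ∃ l : List (Fin n), l.Nodup ∧ (∀ i, i ∈ l) ∧ w = cs.wordProd l)
    (hw' : ∃ l : List (Fin n), l.Nodup ∧ (∀ i, i ∈ l) ∧ w' = cs.wordProd l) :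
    Relation.ReflTransGen
      (fun u v => ∃ x y : W, u = x * y ∧ v = y * x ∧
        cs.length u = cs.length x + cs.length y ∧
        cs.length v = cs.length x + cs.length y) w w' := by
  obtain ⟨l, hnd, hc, rfl⟩ := hw
  obtain ⟨l', hnd', hc', rfl⟩ := hw'
  have h1 := Stmt2Aux.reach cs (Stmt2Aux.mea l) l hnd hc le_rfl
  have h2 := Stmt2Aux.reach cs (Stmt2Aux.mea l') l' hnd' hc' le_rfl
  have hsym : Symmetric (Relation.ReflTransGen (Stmt2Aux.Stp cs)) :=
    fun _ _ h => (@Relation.ReflTransGen.stdSymm _ (Stmt2Aux.Stp cs) ⟨fun _ _ h' => Stmt2Aux.stp_symm cs h'⟩).symm _ _ h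
  exact h1.trans (hsym h2)
end

section
/- In the symmetric group S_n, the minimal-length elements of the conjugacy class of a Coxeter element are exactly the Coxeter elements, and every Coxeter element has length n − 1. -/
open Equiv Equiv.Perm List

/-- The adjacent transposition `(j, j+1)` in `Perm ℕ`. -/
private def nsw (j : ℕ) : Equiv.Perm ℕ := Equiv.swap j (j + 1)

private lemma nsw_prod_fix (x : ℕ) :
    ∀ L : List ℕ, (∀ j ∈ L, x ≠ j ∧ x ≠ j + 1) → (L.map nsw).prod x = x := by
  intro L
  induction L with
  | nil => simp
  | cons j L ih =>
    intro h
    have hx := h j List.mem_cons_self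
    simp only [List.map_cons, List.prod_cons, Equiv.Perm.mul_apply]
    rw [ih (fun a ha => h a (List.mem_cons_of_mem j ha))]
    exact Equiv.swap_apply_of_ne_of_ne hx.1 hx.2

private lemma nsw_prod_bound {i0 : ℕ} :
    ∀ L : List ℕ, (∀ j ∈ L, j ≠ i0) → ∀ x ≤ i0, (L.map nsw).prod x ≤ i0 := by
  intro L
  induction L with
  | nil => simp
  | cons j L ih =>
    intro h x hx
    have hy := ih (fun a ha => h a (List.mem_cons_of_mem j ha)) x hx
    set y := (L.map nsw).prod x with hy'
    simp only [List.map_cons, List.prod_cons, Equiv.Perm.mul_apply, ← hy']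
    have hj := h j List.mem_cons_self
    rcases lt_or_gt_of_ne hj with hlt | hgt
    · by_cases h1 : y = j
      · simpa [nsw, h1] using hlt
      · by_cases h2 : y = j + 1
        · simp only [nsw, h2, Equiv.swap_apply_right]
          omega
        · rw [show nsw j y = y from Equiv.swap_apply_of_ne_of_ne h1 h2]
          exact hy
    · rw [show nsw j y = y from Equiv.swap_apply_of_ne_of_ne (by omega) (by omega)]
      exact hy

private lemma nsw_prod_inv (L : List ℕ) :
    ((L.map nsw).prod)⁻¹ = (L.reverse.map nsw).prod := by
  induction L with
  | nil => simp
  | cons j L ih =>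
    rw [List.map_cons, List.prod_cons, mul_inv_rev, ih, List.reverse_cons, List.map_append,
      List.prod_append]
    simp [nsw]

private lemma zpow_bound {σ : Equiv.Perm ℕ} {i0 : ℕ}
    (h1 : ∀ x ≤ i0, σ x ≤ i0) (h2 : ∀ x ≤ i0, σ⁻¹ x ≤ i0) :
    ∀ k : ℤ, ∀ x ≤ i0, (σ ^ k) x ≤ i0 := by
  intro k
  induction k using Int.induction_on with
  | zero => simpa using fun x hx => hx
  | succ n ih =>
    intro x hx
    rw [zpow_add_one, Equiv.Perm.mul_apply]
    exact ih _ (h1 x hx)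
  | pred n ih =>
    intro x hx
    rw [zpow_sub_one, Equiv.Perm.mul_apply]
    exact ih _ (h2 x hx)

private lemma sc_insert {α : Type*} [DecidableEq α] {σ' : Equiv.Perm α} {u p : α}
    (hp : σ' p = p) (hup : u ≠ p) :
    ∀ {x y : α}, σ'.SameCycle x y → (Equiv.swap u p * σ').SameCycle x y := by
  set σ := Equiv.swap u p * σ' with hσ
  have hσp : σ p = u := by
    rw [hσ, Equiv.Perm.mul_apply, hp, Equiv.swap_apply_right]
  have core : ∀ y : α, σ.SameCycle y (σ' y) := by
    intro y
    by_cases hyu : σ' y = u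
    · have h1 : σ y = p := by rw [hσ, Equiv.Perm.mul_apply, hyu, Equiv.swap_apply_left]
      refine ⟨2, ?_⟩
      rw [zpow_two, Equiv.Perm.mul_apply, h1, hσp, hyu]
    · by_cases hyp : σ' y = p
      · have : y = p := σ'.injective (by rw [hyp, hp])
        rw [this, hp]
      · refine ⟨1, ?_⟩
        rw [zpow_one, hσ, Equiv.Perm.mul_apply,
          Equiv.swap_apply_of_ne_of_ne hyu hyp]
  have aux : ∀ n : ℕ, ∀ x : α, σ.SameCycle x ((σ' ^ n) x) := by
    intro n
    induction n with
    | zero => simp [Equiv.Perm.SameCycle.refl]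
    | succ n ih =>
      intro x
      rw [pow_succ', Equiv.Perm.mul_apply]
      exact (ih x).trans (core _)
  rintro x y ⟨k, rfl⟩
  rcases le_or_gt 0 k with hk | hk
  · obtain ⟨n, rfl⟩ := Int.eq_ofNat_of_zero_le hk
    rw [zpow_natCast]
    exact aux n x
  · have hnk : ((-k).toNat : ℤ) = -k := Int.toNat_of_nonneg (by omega)
    have : (σ' ^ (-k).toNat) ((σ' ^ k) x) = x := by
      rw [← zpow_natCast, hnk, ← Equiv.Perm.mul_apply, ← zpow_add]
      simp
    have h := aux (-k).toNat ((σ' ^ k) x)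
    rw [this] at h
    exact h.symm

private lemma nsw_transitive :
    ∀ m : ℕ, ∀ L : List ℕ, L.Nodup → (∀ j, j ∈ L ↔ j < m) →
      ∀ x ≤ m, ((L.map nsw).prod).SameCycle x 0 := by
  intro m
  induction m with
  | zero =>
    intro L _ _ x hx
    interval_cases x
    exact Equiv.Perm.SameCycle.refl _ _
  | succ m ih =>
    intro L hnd hmem x hx
    have hmL : m ∈ L := (hmem m).2 (Nat.lt_succ_self m)
    obtain ⟨A, B, rfl⟩ := List.append_of_mem hmL
    have hndAB : (A ++ B).Nodup := by
      have : (A ++ B).Sublist (A ++ m :: B) := by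
        exact List.Sublist.append_left (List.sublist_cons_self m B) A
      exact this.nodup hnd
    have hnd' := List.nodup_append.1 hnd
    have hmA : m ∉ A := fun hA => hnd'.2.2 m hA m List.mem_cons_self rfl
    have hmB : m ∉ B := (List.nodup_cons.1 hnd'.2.1).1
    have hA : ∀ j ∈ A, j < m := by
      intro j hj
      have h1 : j < m + 1 := (hmem j).1 (by simp [hj])
      have h2 : j ≠ m := fun h => hmA (h ▸ hj)
      omega
    have hB : ∀ j ∈ B, j < m := by
      intro j hj
      have h1 : j < m + 1 := (hmem j).1 (by simp [hj])
      have h2 : j ≠ m := fun h => hmB (h ▸ hj)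
      omega
    set PA := (A.map nsw).prod with hPA
    set PB := (B.map nsw).prod with hPB
    set σ' := PA * PB with hσ'
    set u := PA m with hu'
    have hPAm1 : PA (m + 1) = m + 1 :=
      nsw_prod_fix _ A (fun j hj => ⟨by have := hA j hj; omega, by have := hA j hj; omega⟩)
    have hPBm1 : PB (m + 1) = m + 1 :=
      nsw_prod_fix _ B (fun j hj => ⟨by have := hB j hj; omega, by have := hB j hj; omega⟩)
    have hprod : ((A ++ m :: B).map nsw).prod = Equiv.swap u (m + 1) * σ' := by
      have hswap : Equiv.swap u (m + 1) = PA * Equiv.swap m (m + 1) * PA⁻¹ := by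
        have h := Equiv.swap_apply_apply PA m (m + 1)
        rw [hPAm1] at h
        rw [hu']
        exact h
      rw [List.map_append, List.prod_append, List.map_cons, List.prod_cons,
        hswap, hσ']
      rw [show nsw m = Equiv.swap m (m + 1) from rfl]
      group
      rfl
    have hp : σ' (m + 1) = m + 1 := by
      rw [hσ', Equiv.Perm.mul_apply, hPBm1, hPAm1]
    have hum : u ≤ m := nsw_prod_bound A (fun j hj => (hA j hj).ne) m le_rfl
    have hup : u ≠ m + 1 := by omega
    have hσ'AB : σ' = ((A ++ B).map nsw).prod := by
      rw [hσ', List.map_append, List.prod_append]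
    have hIH : ∀ x ≤ m, σ'.SameCycle x 0 := by
      intro x hx
      rw [hσ'AB]
      refine ih (A ++ B) hndAB ?_ x hx
      intro j
      constructor
      · intro hj
        rcases List.mem_append.1 hj with h | h
        · exact hA j h
        · exact hB j h
      · intro hj
        have : j ∈ A ++ m :: B := (hmem j).2 (by omega)
        rcases List.mem_append.1 this with h | h
        · exact List.mem_append.2 (Or.inl h)
        · rcases List.mem_cons.1 h with h | h
          · omega
          · exact List.mem_append.2 (Or.inr h)
    rw [hprod]
    by_cases hxm : x ≤ m
    · exact sc_insert hp hup (hIH x hxm)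
    · have hx1 : x = m + 1 := by omega
      have h1 : (Equiv.swap u (m + 1) * σ').SameCycle x u := by
        refine ⟨1, ?_⟩
        rw [zpow_one, Equiv.Perm.mul_apply, hx1, hp, Equiv.swap_apply_right]
      exact h1.trans (sc_insert hp hup (hIH u hum))

private lemma swap_cube {α : Type*} [DecidableEq α] {a b c : α}
    (hab : a ≠ b) (hac : a ≠ c) (hbc : b ≠ c) :
    (Equiv.swap a b * Equiv.swap b c) ^ 3 = 1 := by
  set σ := Equiv.swap a b * Equiv.swap b c with hσ
  have ha : σ a = b := by
    rw [hσ, Equiv.Perm.mul_apply, Equiv.swap_apply_of_ne_of_ne hab hac, Equiv.swap_apply_left]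
  have hb : σ b = c := by
    rw [hσ, Equiv.Perm.mul_apply, Equiv.swap_apply_left,
      Equiv.swap_apply_of_ne_of_ne hac.symm hbc.symm]
  have hc : σ c = a := by
    rw [hσ, Equiv.Perm.mul_apply, Equiv.swap_apply_right, Equiv.swap_apply_right]
  have h3 : σ ^ 3 = σ * σ * σ := by rw [pow_succ, pow_succ, pow_one]
  ext x
  rw [h3, Equiv.Perm.mul_apply, Equiv.Perm.mul_apply, Equiv.Perm.one_apply]
  by_cases hxa : x = a
  · rw [hxa, ha, hb, hc]
  · by_cases hxb : x = b
    · rw [hxb, hb, hc, ha]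
    · by_cases hxc : x = c
      · rw [hxc, hc, ha, hb]
      · have hfix : σ x = x := by
          rw [hσ, Equiv.Perm.mul_apply, Equiv.swap_apply_of_ne_of_ne hxb hxc,
            Equiv.swap_apply_of_ne_of_ne hxa hxb]
        rw [hfix, hfix, hfix]

private lemma swap_disj_sq {α : Type*} [DecidableEq α] {a b c d : α}
    (hac : a ≠ c) (had : a ≠ d) (hbc : b ≠ c) (hbd : b ≠ d) :
    (Equiv.swap a b * Equiv.swap c d) ^ 2 = 1 := by
  have hdisj : (Equiv.swap a b).Disjoint (Equiv.swap c d) := by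
    intro x
    by_cases hxc : x = c
    · exact Or.inl (Equiv.swap_apply_of_ne_of_ne (by rw [hxc]; exact hac.symm) (by rw [hxc]; exact hbc.symm))
    · by_cases hxd : x = d
      · exact Or.inl (Equiv.swap_apply_of_ne_of_ne (by rw [hxd]; exact had.symm) (by rw [hxd]; exact hbd.symm))
      · exact Or.inr (Equiv.swap_apply_of_ne_of_ne hxc hxd)
  rw [hdisj.commute.mul_pow, sq, sq, Equiv.swap_mul_self, Equiv.swap_mul_self, one_mul]


/-- In the symmetric group (the Coxeter group of type `A_r`), every Coxeter element (a product
of all the simple reflections, each appearing exactly once, in some order) has length `r`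
(`= n − 1` for `Sₙ`), and the minimal-length elements of the conjugacy class of a Coxeter
element are exactly the Coxeter elements. -/
theorem stmt_19 (r : ℕ) {W : Type*} [Group W]
    (cs : CoxeterSystem (CoxeterMatrix.Aₙ r) W) (c : W)
    (hc : ∃ l : List (Fin r), l.Nodup ∧ (∀ i, i ∈ l) ∧ c = cs.wordProd l) :
    cs.length c = r ∧
    ∀ w : W, IsConj c w →
      ((∀ v : W, IsConj w v → cs.length w ≤ cs.length v) ↔
        ∃ l : List (Fin r), l.Nodup ∧ (∀ i, i ∈ l) ∧ w = cs.wordProd l) := by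
  classical
  -- the permutation representation
  set f : Fin r → Equiv.Perm ℕ := fun i => nsw i.val with hf
  have hlift : (CoxeterMatrix.Aₙ r).IsLiftable f := by
    intro i j
    by_cases hij : i = j
    · subst hij
      rw [(CoxeterMatrix.Aₙ r).diagonal i, pow_one, hf]
      exact Equiv.swap_mul_self _ _
    · have hval : (CoxeterMatrix.Aₙ r) i j =
          if (j : ℕ) + 1 = i ∨ (i : ℕ) + 1 = j then 3 else 2 := by
        exact if_neg hij
      by_cases hadj : (j : ℕ) + 1 = i ∨ (i : ℕ) + 1 = j
      · rw [hval, if_pos hadj]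
        rcases hadj with h | h
        · have : f i * f j = Equiv.swap ((j : ℕ) + 2) ((j : ℕ) + 1) *
              Equiv.swap ((j : ℕ) + 1) (j : ℕ) := by
            rw [hf]
            simp only [nsw]
            rw [show (i : ℕ) = (j : ℕ) + 1 from h.symm,
              show (j : ℕ) + 1 + 1 = (j : ℕ) + 2 from rfl,
              Equiv.swap_comm ((j : ℕ) + 1) ((j : ℕ) + 2),
              Equiv.swap_comm (j : ℕ) ((j : ℕ) + 1)]
          rw [this]
          exact swap_cube (by omega) (by omega) (by omega)
        · have : f i * f j = Equiv.swap (i : ℕ) ((i : ℕ) + 1) *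
              Equiv.swap ((i : ℕ) + 1) ((i : ℕ) + 2) := by
            rw [hf]
            simp only [nsw]
            congr 2 <;> omega
          rw [this]
          exact swap_cube (by omega) (by omega) (by omega)
      · rw [hval, if_neg hadj]
        push_neg at hadj
        have hne : (i : ℕ) ≠ (j : ℕ) := fun h => hij (Fin.val_injective h)
        exact swap_disj_sq (by omega) (by omega) (by omega) (by omega)
  set π : W →* Equiv.Perm ℕ := cs.lift ⟨f, hlift⟩ with hπdef
  have hπ : ∀ l : List (Fin r), π (cs.wordProd l) = ((l.map Fin.val).map nsw).prod := by
    intro l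
    rw [CoxeterSystem.wordProd, map_list_prod]
    congr 1
    rw [List.map_map, List.map_map]
    refine List.map_congr_left (fun i _ => ?_)
    show π (cs.simple i) = nsw i.val
    rw [hπdef]
    exact cs.lift_apply_simple hlift i
  have hbound : ∀ (g : W) (x : ℕ), x ≤ r → π g x ≤ r := by
    intro g x hx
    obtain ⟨l, rfl⟩ := cs.wordProd_surjective g
    rw [hπ]
    refine nsw_prod_bound _ (fun j hj => ?_) x hx
    obtain ⟨i, _, rfl⟩ := List.mem_map.1 hj
    exact (i.isLt).ne
  have htrans_c : ∀ x y : ℕ, x ≤ r → y ≤ r → (π c).SameCycle x y := by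
    obtain ⟨l₀, hnd₀, hfull₀, hc_eq⟩ := hc
    have hmem : ∀ j, j ∈ l₀.map Fin.val ↔ j < r := by
      intro j
      constructor
      · intro hj
        obtain ⟨i, _, rfl⟩ := List.mem_map.1 hj
        exact i.isLt
      · intro hj
        exact List.mem_map.2 ⟨⟨j, hj⟩, hfull₀ _, rfl⟩
    have h := nsw_transitive r (l₀.map Fin.val) (hnd₀.map Fin.val_injective) hmem
    intro x y hx hy
    rw [hc_eq, hπ]
    exact (h x hx).trans (h y hy).symm
  have htrans : ∀ v : W, IsConj c v → ∀ x y : ℕ, x ≤ r → y ≤ r → (π v).SameCycle x y := by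
    intro v hv x y hx hy
    obtain ⟨g, hg⟩ := isConj_iff.1 hv
    have hx' : (π g)⁻¹ x ≤ r := by rw [← map_inv]; exact hbound g⁻¹ x hx
    have hy' : (π g)⁻¹ y ≤ r := by rw [← map_inv]; exact hbound g⁻¹ y hy
    obtain ⟨k, hk⟩ := htrans_c _ _ hx' hy'
    refine ⟨k, ?_⟩
    rw [← hg]
    simp only [map_mul, map_inv]
    rw [conj_zpow, Equiv.Perm.mul_apply, Equiv.Perm.mul_apply, hk,
      ← Equiv.Perm.mul_apply, mul_inv_cancel, Equiv.Perm.one_apply]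
  have hfull : ∀ (v : W), IsConj c v → ∀ (l : List (Fin r)), v = cs.wordProd l →
      ∀ i : Fin r, i ∈ l := by
    intro v hv l hvl i
    by_contra hil
    have hne : ∀ j ∈ l.map Fin.val, j ≠ i.val := by
      intro j hj
      obtain ⟨i', hi', rfl⟩ := List.mem_map.1 hj
      exact fun h => hil ((Fin.val_injective h : i' = i) ▸ hi')
    set σ := ((l.map Fin.val).map nsw).prod with hσ
    have h1 : ∀ x ≤ i.val, σ x ≤ i.val := fun x hx => nsw_prod_bound _ hne x hx
    have h2 : ∀ x ≤ i.val, σ⁻¹ x ≤ i.val := by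
      intro x hx
      rw [hσ, nsw_prod_inv]
      exact nsw_prod_bound _ (fun j hj => hne j (List.mem_reverse.1 hj)) x hx
    obtain ⟨k, hk⟩ := htrans v hv 0 r (Nat.zero_le r) le_rfl
    have hb : (σ ^ k) 0 ≤ i.val := zpow_bound h1 h2 k 0 (Nat.zero_le _)
    rw [hvl, hπ, ← hσ] at hk
    rw [hk] at hb
    have := i.isLt
    omega
  have hlow : ∀ v : W, IsConj c v → r ≤ cs.length v := by
    intro v hv
    obtain ⟨lv, hlen, hveq⟩ := cs.exists_reduced_word v
    have hfv := hfull v hv lv hveq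
    have huniv : lv.toFinset = Finset.univ :=
      Finset.eq_univ_iff_forall.2 (fun i => List.mem_toFinset.2 (hfv i))
    calc r = (Finset.univ : Finset (Fin r)).card := by simp
    _ = lv.toFinset.card := by rw [huniv]
    _ ≤ lv.length := lv.toFinset_card_le
    _ = cs.length v := by rw [hveq]; exact hlen.symm
  have hup : ∀ l : List (Fin r), l.Nodup → (∀ i, i ∈ l) → l.length = r := by
    intro l hnd hfl
    have huniv : l.toFinset = Finset.univ :=
      Finset.eq_univ_iff_forall.2 (fun i => List.mem_toFinset.2 (hfl i))
    rw [← List.toFinset_card_of_nodup hnd, huniv, Finset.card_univ, Fintype.card_fin]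
  have hcr : cs.length c = r := by
    obtain ⟨l₀, hnd₀, hfull₀, hc_eq⟩ := hc
    refine le_antisymm ?_ (hlow c (IsConj.refl c))
    rw [hc_eq]
    exact le_trans (cs.length_wordProd_le l₀) (le_of_eq (hup l₀ hnd₀ hfull₀))
  refine ⟨hcr, fun w hw => ⟨fun hmin => ?_, ?_⟩⟩
  · have hwr : cs.length w ≤ r := le_trans (hmin c hw.symm) (le_of_eq hcr)
    obtain ⟨lw, hlen, hweq⟩ := cs.exists_reduced_word w
    have hfw := hfull w hw lw hweq
    have huniv : lw.toFinset = Finset.univ :=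
      Finset.eq_univ_iff_forall.2 (fun i => List.mem_toFinset.2 (hfw i))
    have hlength : lw.length = r := by
      refine le_antisymm (by rw [← hlen.eq, ← hweq]; exact hwr) ?_
      calc r = lw.toFinset.card := by rw [huniv, Finset.card_univ, Fintype.card_fin]
      _ ≤ lw.length := lw.toFinset_card_le
    have hnd : lw.Nodup := by
      have h2 : lw.dedup.length = lw.length := by
        have : lw.toFinset.card = lw.dedup.length := rfl
        rw [← this, huniv, Finset.card_univ, Fintype.card_fin, hlength]
      exact List.dedup_eq_self.1 (lw.dedup_sublist.eq_of_length h2)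
    exact ⟨lw, hnd, hfw, hweq⟩
  · rintro ⟨l, hnd, hfl, rfl⟩ v hv
    exact le_trans (le_trans (cs.length_wordProd_le l) (le_of_eq (hup l hnd hfl)))
      (hlow v (hw.trans hv))
end
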